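/- Let Cov_Fib[ℓ] denote the length of the shortest cover of the length-ℓ prefix of the infinite Fibonacci word Fib. For every k ≥ 4, Cov_Fib[F_k − 1] = F_k − 1; that is, the prefix of Fib of length F_k − 1 is superprimitive (has no proper cover). -/

import Mathlib

section Defs

variable {α : Type*}

/-- `C` occurs in `T` at starting position `i`. -/
def OccursAt (C T : List α) (i : ℕ) : Prop :=
  i + C.length ≤ T.length ∧ (T.drop i).take C.length = C

/-- `C` is a cover of `T`: `C` occurs in `T` and every position of `T`
lies within an occurrence of `C`. -/
def IsCover (C T : List α) : Prop :=
  (∃ i, OccursAt C T i) ∧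
    ∀ q, q < T.length → ∃ i, OccursAt C T i ∧ i ≤ q ∧ q < i + C.length

/-- A border of `T` is both a prefix and a suffix of `T`. -/
def IsBorder (B T : List α) : Prop := B <+: T ∧ B <:+ T

/-- `p` is a period of `U`: `U[i] = U[i+p]` for all `0 ≤ i < |U| - p`. -/
def IsPeriod (p : ℕ) (U : List α) : Prop :=
  0 < p ∧ ∀ i, i + p < U.length → U[i]? = U[i + p]?

/-- `U` is aperiodic: its smallest period `p` satisfies `2p > |U|`
(equivalently, every period `p` of `U` satisfies `2p > |U|`). -/
def StrAperiodic (U : List α) : Prop := ∀ p, IsPeriod p U → U.length < 2 * p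

/-- A nonempty string `X` is primitive if `X = Y^t` implies `t = 1`. -/
def StrPrimitive (X : List α) : Prop :=
  X ≠ [] ∧ ∀ (Y : List α) (t : ℕ), X = (List.replicate t Y).flatten → t = 1

/-- A string is superprimitive if it has no proper cover. -/
def Superprimitive (T : List α) : Prop :=
  ¬ ∃ C : List α, IsCover C T ∧ C.length < T.length

/-- The length of the shortest cover of `T`. -/
noncomputable def covLen (T : List α) : ℕ :=
  sInf {c | ∃ C : List α, C.length = c ∧ IsCover C T}

/-- `{a, a+p, ..., a+(t-1)p}` is a maximal arithmetic progression with
difference `p` inside the set `S`. -/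
def MaxProg (S : Set ℕ) (p a t : ℕ) : Prop :=
  0 < t ∧ (∀ r, r < t → a + r * p ∈ S) ∧ (∀ b, b + p = a → b ∉ S) ∧ a + t * p ∉ S

end Defs

/-- Fibonacci strings over `Bool` (`true` = a, `false` = b):
`Fib_0 = b`, `Fib_1 = a`, `Fib_m = Fib_{m-1} Fib_{m-2}`. -/
def fibWord : ℕ → List Bool
  | 0 => [false]
  | 1 => [true]
  | (m + 2) => fibWord (m + 1) ++ fibWord m

/-- Fibonacci numbers `F_k = |Fib_k|`: `F_0 = F_1 = 1`, `F_2 = 2`, `F_3 = 3`, ... -/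
def F (k : ℕ) : ℕ := (fibWord k).length

/-- The `n`-th letter of the infinite Fibonacci word (each `Fib_m`, `m ≥ 1`,
is a prefix of the infinite word, and `F_{n+2} > n`). -/
def fibInf (n : ℕ) : Bool := (fibWord (n + 2)).getD n false

/-- The length-`ℓ` prefix `Fib[0..ℓ)` of the infinite Fibonacci word. -/
def fibPrefix (ℓ : ℕ) : List Bool := (List.range ℓ).map fibInf

/-- `Cov_Fib[ℓ]`: the length of the shortest cover of `Fib[0..ℓ)`. -/
noncomputable def covFib (ℓ : ℕ) : ℕ := covLen (fibPrefix ℓ)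

lemma fibWord_succ_succ (m : ℕ) : fibWord (m+2) = fibWord (m+1) ++ fibWord m := rfl

lemma F_add_two (m : ℕ) : F (m+2) = F (m+1) + F m := by
  simp [F, fibWord_succ_succ]

lemma F_pos (m : ℕ) : 1 ≤ F m := by
  induction m using Nat.strong_induction_on with
  | _ m ih =>
    match m with
    | 0 => decide
    | 1 => decide
    | (m+2) => rw [F_add_two]; have := ih (m+1) (by omega); omega

lemma F_le_succ (m : ℕ) : F m ≤ F (m+1) := by
  match m with
  | 0 => decide
  | (m+1) => rw [F_add_two]; have := F_pos m; omega

lemma F_mono {a b : ℕ} (h : a ≤ b) : F a ≤ F b := by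
  induction b with
  | zero => simp [Nat.le_zero.mp h]
  | succ b ih =>
    rcases Nat.lt_or_ge a (b+1) with h' | h'
    · exact le_trans (ih (by omega)) (F_le_succ b)
    · have : a = b + 1 := by omega
      simp [this]

lemma F_lt_succ {m : ℕ} (h : 1 ≤ m) : F m < F (m+1) := by
  match m, h with
  | (m+1), _ => rw [F_add_two]; have := F_pos m; omega

lemma F_strict {a b : ℕ} (ha : 1 ≤ a) (h : a < b) : F a < F b := by
  have : F (a+1) ≤ F b := F_mono (by omega)
  have := F_lt_succ ha
  omega

lemma fibWord_prefix_succ (m : ℕ) : fibWord (m+1) <+: fibWord (m+2) := by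
  rw [fibWord_succ_succ]; exact List.prefix_append _ _

lemma fibWord_prefix {a b : ℕ} (ha : 1 ≤ a) (h : a ≤ b) : fibWord a <+: fibWord b := by
  induction b with
  | zero => omega
  | succ b ih =>
    rcases Nat.lt_or_ge a (b+1) with h' | h'
    · have hb : 1 ≤ b := by omega
      refine (ih (by omega)).trans ?_
      match b, hb with
      | (b+1), _ => exact fibWord_prefix_succ b
    · have : a = b + 1 := by omega
      simp [this]

lemma getD_of_prefix {l₁ l₂ : List Bool} (h : l₁ <+: l₂) {i : ℕ} (hi : i < l₁.length) :
    l₂.getD i false = l₁.getD i false := by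
  obtain ⟨t, rfl⟩ := h
  exact List.getD_append _ _ _ _ hi

lemma fibInf_eq {m i : ℕ} (hm : 1 ≤ m) (hi : i < F m) :
    fibInf i = (fibWord m).getD i false := by
  unfold fibInf
  rcases Nat.le_total m (i+2) with h | h
  · exact getD_of_prefix (fibWord_prefix hm h) hi
  · exact (getD_of_prefix (fibWord_prefix (by omega) h) (by
      have : i < F (i+2) := by
        have : i + 1 ≤ F (i+1) := by
          clear hi hm h
          induction i using Nat.strong_induction_on with
          | _ i ih =>
            match i with
            | 0 => decide
            | (i+1) => rw [F_add_two]; have := ih i (by omega); have := F_pos i; omega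
        rw [F_add_two]; omega
      exact this)).symm

lemma le_F_succ (i : ℕ) : i + 1 ≤ F (i+1) := by
  induction i using Nat.strong_induction_on with
  | _ i ih =>
    match i with
    | 0 => decide
    | (i+1) => rw [F_add_two]; have := ih i (by omega); have := F_pos i; omega

lemma lt_F_two (i : ℕ) : i < F (i+2) := by
  have := le_F_succ i; have := F_pos (i+1); rw [F_add_two]; omega

lemma fibInf_zero : fibInf 0 = true := by decide
lemma fibInf_one : fibInf 1 = false := by decide

-- first letter lemma : fibInf (F (j+2)) = true
lemma fibWord_getD_zero (m : ℕ) (hm : 1 ≤ m) : (fibWord m).getD 0 false = true := by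
  have : fibInf 0 = (fibWord m).getD 0 false := fibInf_eq hm (F_pos m)
  rw [← this]; decide

lemma fibInf_F (j : ℕ) : fibInf (F (j+2)) = true := by
  have h1 : F (j+2) < F (j+3) := F_lt_succ (by omega)
  rw [fibInf_eq (m := j+3) (by omega) h1]
  rw [show fibWord (j+3) = fibWord (j+2) ++ fibWord (j+1) from rfl]
  have hl : (fibWord (j+2)).length = F (j+2) := rfl
  rw [List.getD_append_right _ _ _ _ (by omega)]
  rw [hl, Nat.sub_self]
  exact fibWord_getD_zero (j+1) (by omega)

-- last-but-one letter: fibInf (F (j+2) - 2) = decide (Even j)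
lemma fibInf_end : ∀ j, fibInf (F (j+2) - 2) = decide (Even j) := by
  intro j
  induction j using Nat.strong_induction_on with
  | _ j ih =>
    match j with
    | 0 => decide
    | 1 => decide
    | (j+2) =>
      have e4 : F (j+4) = F (j+3) + F (j+2) := F_add_two _
      have e3 : F (j+3) = F (j+2) + F (j+1) := F_add_two _
      have h2 : 2 ≤ F (j+2) := le_trans (by omega) (show j+2 ≤ F (j+2) from le_F_succ (j+1))
      have hlt : F (j+4) - 2 < F (j+4) := by have := F_pos (j+4); omega
      rw [fibInf_eq (m := j+4) (by omega) hlt]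
      rw [show fibWord (j+4) = fibWord (j+3) ++ fibWord (j+2) from rfl]
      have hl : (fibWord (j+3)).length = F (j+3) := rfl
      rw [List.getD_append_right _ _ _ _ (by omega)]
      rw [hl]
      have : F (j+4) - 2 - F (j+3) = F (j+2) - 2 := by omega
      rw [this, ← fibInf_eq (m := j+2) (by omega) (by omega)]
      rw [ih j (by omega)]
      simp [Nat.even_add]

lemma two_le_F (j : ℕ) : 2 ≤ F (j+2) :=
  le_trans (by omega) (show j+2 ≤ F (j+2) from le_F_succ (j+1))

-- near-commutation / swap lemma
lemma swap_take : ∀ j, (fibWord (j+2) ++ fibWord (j+1)).take (F (j+3) - 2)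
    = (fibWord (j+1) ++ fibWord (j+2)).take (F (j+3) - 2) := by
  intro j
  induction j with
  | zero => decide
  | succ j ih =>
    have h4 : F (j+4) = F (j+3) + F (j+2) := F_add_two (j+2)
    have h3 : 2 ≤ F (j+3) := two_le_F (j+1)
    have e : F (j+4) - 2 = F (j+2) + (F (j+3) - 2) := by omega
    rw [show (j+1+3) = j+4 from rfl, show (j+1+2) = j+3 from rfl, show (j+1+1) = j+2 from rfl, e]
    rw [show fibWord (j+3) = fibWord (j+2) ++ fibWord (j+1) from rfl]
    have hl : (fibWord (j+2)).length = F (j+2) := rfl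
    calc ((fibWord (j+2) ++ fibWord (j+1)) ++ fibWord (j+2)).take (F (j+2) + (F (j+3) - 2))
        = (fibWord (j+2) ++ (fibWord (j+1) ++ fibWord (j+2))).take ((fibWord (j+2)).length + (F (j+3) - 2)) := by
          rw [List.append_assoc, hl]
      _ = fibWord (j+2) ++ (fibWord (j+1) ++ fibWord (j+2)).take (F (j+3) - 2) :=
          List.take_length_add_append _
      _ = fibWord (j+2) ++ (fibWord (j+2) ++ fibWord (j+1)).take (F (j+3) - 2) := by rw [ih]
      _ = (fibWord (j+2) ++ (fibWord (j+2) ++ fibWord (j+1))).take ((fibWord (j+2)).length + (F (j+3) - 2)) :=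
          (List.take_length_add_append _).symm
      _ = (fibWord (j+2) ++ (fibWord (j+2) ++ fibWord (j+1))).take (F (j+2) + (F (j+3) - 2)) := by
          rw [hl]

lemma getD_take {l : List Bool} {m n : ℕ} (h : n < m) :
    (l.take m).getD n false = l.getD n false := by
  rw [List.getD_eq_getElem?_getD, List.getD_eq_getElem?_getD, List.getElem?_take, if_pos h]

-- the period lemma: F (j+1) is a period of the prefix of length F (j+3) - 2
lemma fib_period (j i : ℕ) (h : i + F (j+1) ≤ F (j+3) - 3) :
    fibInf (i + F (j+1)) = fibInf i := by
  have h3 : F (j+3) = F (j+2) + F (j+1) := F_add_two (j+1)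
  have h2 : F (j+2) = F (j+1) + F j := F_add_two j
  have hp0 := F_pos j
  have hp1 := F_pos (j+1)
  have hp3 := F_pos (j+3)
  have hN : i + F (j+1) < F (j+3) := by omega
  rw [fibInf_eq (m := j+3) (by omega) hN]
  rw [show fibWord (j+3) = fibWord (j+2) ++ fibWord (j+1) from rfl]
  have hb : i + F (j+1) < F (j+3) - 2 := by omega
  rw [← getD_take (l := fibWord (j+2) ++ fibWord (j+1)) (m := F (j+3) - 2) (n := i + F (j+1)) hb]
  rw [swap_take]
  rw [getD_take (n := i + F (j+1)) hb]
  have hl : (fibWord (j+1)).length = F (j+1) := rfl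
  rw [List.getD_append_right _ _ _ _ (by omega)]
  rw [hl, Nat.add_sub_cancel]
  exact (fibInf_eq (m := j+2) (by omega) (by omega)).symm

-- main mismatch at the Fibonacci-period boundary
lemma mainA (j : ℕ) : ∃ r, r < F (j+2) - 1 ∧ fibInf r ≠ fibInf (r + F (j+1)) := by
  have h2 : 2 ≤ F (j+2) := two_le_F j
  have e3 : F (j+3) = F (j+2) + F (j+1) := F_add_two (j+1)
  refine ⟨F (j+2) - 2, by omega, ?_⟩
  have hr : F (j+2) - 2 + F (j+1) = F (j+3) - 2 := by omega
  rw [hr, fibInf_end j, fibInf_end (j+1)]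
  by_cases h : Even j
  · simp [h, Nat.even_add_one]
  · simp [h, Nat.even_add_one]

lemma need1 : ∀ M p, 1 ≤ p → p < F (M+2) → ∃ r, r < F (M+2) - 1 ∧ fibInf r ≠ fibInf (r + p) := by
  intro M
  induction M using Nat.strong_induction_on with
  | _ M ih =>
    intro p hp1 hpF
    match M with
    | 0 =>
      have hF : F (0+2) = 2 := by decide
      have : p = 1 := by omega
      subst this
      obtain ⟨r, hr, hne⟩ := mainA 0
      exact ⟨r, by omega, hne⟩
    | 1 =>
      have hF3 : F (1+2) = 3 := by decide
      have hF2 : F (0+2) = 2 := by decide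
      rcases (by omega : p = 1 ∨ p = 2) with h | h
      · subst h
        obtain ⟨r, hr, hne⟩ := mainA 0
        exact ⟨r, by omega, hne⟩
      · subst h
        obtain ⟨r, hr, hne⟩ := mainA 1
        exact ⟨r, by omega, hne⟩
    | (M+2) =>
      have a1 : F (M+2+2) = F (M+4) := rfl
      have a2 : F (M+2+1) = F (M+3) := rfl
      have a3 : F (M+1+2) = F (M+3) := rfl
      have a4 : F (M+1+1) = F (M+2) := rfl
      have a5 : F (M+2+3) = F (M+5) := rfl
      have e4 : F (M+4) = F (M+3) + F (M+2) := F_add_two (M+2)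
      have e3 : F (M+3) = F (M+2) + F (M+1) := F_add_two (M+1)
      have e5 : F (M+5) = F (M+4) + F (M+3) := F_add_two (M+3)
      have hp2 := two_le_F M
      have hp1' := F_pos (M+1)
      rcases Nat.lt_trichotomy p (F (M+3)) with h | h | h
      · obtain ⟨r, hr, hne⟩ := ih (M+1) (by omega) p hp1 (by omega)
        exact ⟨r, by omega, hne⟩
      · exact h ▸ mainA (M+2)
      · have hq1 : 1 ≤ p - F (M+3) := by omega
        have hq2 : p - F (M+3) < F (M+2) := by omega
        obtain ⟨r, hr, hne⟩ := ih M (by omega) (p - F (M+3)) hq1 (by omega)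
        refine ⟨r, by omega, ?_⟩
        have hper : fibInf ((r + (p - F (M+3))) + F (M+3)) = fibInf (r + (p - F (M+3))) :=
          fib_period (M+2) (r + (p - F (M+3))) (by omega)
        rw [show r + p = (r + (p - F (M+3))) + F (M+3) from by omega, hper]
        exact hne

lemma lemE : ∀ j m p, 1 ≤ p → p + F (m+2) = F (j+2) →
    ∃ r, r < F (m+4) - 1 ∧ fibInf r ≠ fibInf (r + p) := by
  intro j
  induction j using Nat.strong_induction_on with
  | _ j ih =>
    intro m p hp1 hpe
    have hm2 := two_le_F m
    have hm4 : F (m+4) = F (m+3) + F (m+2) := F_add_two (m+2)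
    have hm3 : F (m+3) = F (m+2) + F (m+1) := F_add_two (m+1)
    have hm1 := F_pos (m+1)
    -- j > m since F (j+2) > F (m+2)
    have hjm : m < j := by
      by_contra hcon
      have : F (j+2) ≤ F (m+2) := F_mono (by omega)
      omega
    rcases Nat.lt_trichotomy j (m+3) with hj | hj | hj
    · -- j = m+1 or j = m+2
      rcases (by omega : j = m+1 ∨ j = m+2) with rfl | rfl
      · -- p = F (m+1)
        have aeq : F (m+1+2) = F (m+3) := rfl
        have hpv : p = F (m+1) := by omega
        subst hpv
        obtain ⟨r, hr, hne⟩ := mainA m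
        exact ⟨r, by omega, hne⟩
      · -- p = F (m+3)
        have aeq : F (m+2+2) = F (m+4) := rfl
        have hpv : p = F (m+3) := by omega
        subst hpv
        obtain ⟨r, hr, hne⟩ := mainA (m+2)
        exact ⟨r, by
          have : F (m+2+2) = F (m+4) := rfl
          omega, by
          have a2 : F (m+2+1) = F (m+3) := rfl
          rw [← a2]; exact hne⟩
    · -- j = m+3 handled by the general recursion too? handle directly via t = m+1
      subst hj
      -- p + F (m+2) = F (m+5)
      have a5 : F (m+3+2) = F (m+5) := rfl
      have hm5 : F (m+5) = F (m+4) + F (m+3) := F_add_two (m+3)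
      -- p = F (m+4) + F (m+1)
      have hpv : p = F (m+4) + F (m+1) := by omega
      obtain ⟨r, hr, hne⟩ := mainA m
      refine ⟨r, by omega, ?_⟩
      have hper : fibInf ((r + F (m+1)) + F (m+4)) = fibInf (r + F (m+1)) := by
        refine fib_period (m+3) (r + F (m+1)) ?_
        have a6 : F (m+3+3) = F (m+6) := rfl
        have a7 : F (m+3+1) = F (m+4) := rfl
        have hm6 : F (m+6) = F (m+5) + F (m+4) := F_add_two (m+4)
        omega
      rw [show r + p = (r + F (m+1)) + F (m+4) from by omega]
      rw [show fibInf (r + F (m+1) + F (m+4)) = fibInf (r + F (m+1)) from hper]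
      exact hne
    · -- j ≥ m+4 : recurse on j-2
      obtain ⟨t, rfl⟩ : ∃ t, j = t + 2 := ⟨j - 2, by omega⟩
      have a1 : F (t+2+2) = F (t+4) := rfl
      have e4 : F (t+4) = F (t+3) + F (t+2) := F_add_two (t+2)
      have e3 : F (t+3) = F (t+2) + F (t+1) := F_add_two (t+1)
      have hmt : F (m+2) ≤ F (t+1) := F_mono (by omega)
      have hmt2 : F (m+4) ≤ F (t+3) := F_mono (by omega)
      have ht1 : F (t+1) ≤ F (t+2) := F_le_succ (t+1)
      -- p' = p - F (t+3) ≥ 1, p' + F (m+2) = F (t+2)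
      have hp'1 : 1 ≤ p - F (t+3) := by omega
      have hp'e : (p - F (t+3)) + F (m+2) = F (t+2) := by omega
      obtain ⟨r, hr, hne⟩ := ih t (by omega) m (p - F (t+3)) hp'1 hp'e
      refine ⟨r, hr, ?_⟩
      have hper : fibInf ((r + (p - F (t+3))) + F (t+3)) = fibInf (r + (p - F (t+3))) := by
        refine fib_period (t+2) (r + (p - F (t+3))) ?_
        have a2 : F (t+2+1) = F (t+3) := rfl
        have a3 : F (t+2+3) = F (t+5) := rfl
        have e5 : F (t+5) = F (t+4) + F (t+3) := F_add_two (t+3)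
        omega
      rw [show r + p = (r + (p - F (t+3))) + F (t+3) from by omega]
      rw [show fibInf (r + (p - F (t+3)) + F (t+3)) = fibInf (r + (p - F (t+3))) from hper]
      exact hne

lemma need2 : ∀ k p, 1 ≤ p → p + 2 ≤ F k →
    (∃ m, p + F (m+2) = F k) ∨ ∃ r, r + p + 2 ≤ F k ∧ fibInf r ≠ fibInf (r + p) := by
  intro k
  induction k using Nat.strong_induction_on with
  | _ k ih =>
    intro p hp1 hp2
    match k with
    | 0 => exact absurd hp2 (by have : F 0 = 1 := by decide
                                omega)
    | 1 => exact absurd hp2 (by have : F 1 = 1 := by decide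
                                omega)
    | 2 => exact absurd hp2 (by have : F 2 = 2 := by decide
                                omega)
    | 3 =>
      have h3 : F 3 = 3 := by decide
      have h2 : F (0+2) = 2 := by decide
      exact Or.inl ⟨0, by omega⟩
    | (t+4) =>
      have a1 : F (t+1+2) = F (t+3) := rfl
      have a2 : F (t+2+2) = F (t+4) := rfl
      have e4 : F (t+4) = F (t+3) + F (t+2) := F_add_two (t+2)
      have e3 : F (t+3) = F (t+2) + F (t+1) := F_add_two (t+1)
      have ht2 := two_le_F t
      have ht1 := F_pos (t+1)
      rcases Nat.lt_trichotomy p (F (t+3)) with h | h | h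
      · -- p < F (t+3)
        rcases (by omega : p + 1 = F (t+3) ∨ p + 2 ≤ F (t+3)) with hEdge | hIH
        · -- p = F (t+3) - 1 : mismatch at r = 1
          right
          refine ⟨1, by omega, ?_⟩
          rw [fibInf_one, show 1 + p = F (t+3) from by omega]
          rw [show fibInf (F (t+3)) = true from fibInf_F (t+1)]
          simp
        · rcases ih (t+3) (by omega) p hp1 hIH with ⟨m, hm⟩ | ⟨r, hb, hne⟩
          · -- p + F (m+2) = F (t+3); split on size of m
            have hmlt : m + 2 < t + 3 := by
              by_contra hcon
              have : F (t+3) ≤ F (m+2) := F_mono (by omega)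
              omega
            rcases Nat.lt_trichotomy (m+2) (t+1) with hm2 | hm2 | hm2
            · -- m + 2 ≤ t : use lemE at level j = t+1
              obtain ⟨r, hr, hne⟩ := lemE (t+1) m p hp1 (by omega)
              right
              refine ⟨r, ?_, hne⟩
              have h1 : F (m+4) = F (m+3) + F (m+2) := F_add_two (m+2)
              have h2 : F (m+3) ≤ F (t+2) := F_mono (by omega)
              omega
            · -- m + 2 = t + 1 : p = F (t+3) - F (t+1), left with m := t+1
              left
              refine ⟨t+1, ?_⟩
              have : F (m+2) = F (t+1) := by rw [hm2]
              omega
            · -- m + 2 = t + 2 : p = F (t+1), use mainA t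
              have hm2' : m + 2 = t + 2 := by omega
              have hFv : F (m+2) = F (t+2) := by rw [hm2']
              have hpv : p = F (t+1) := by omega
              subst hpv
              obtain ⟨r, hr, hne⟩ := mainA t
              right
              exact ⟨r, by omega, hne⟩
          · right
            exact ⟨r, by omega, hne⟩
      · -- p = F (t+3)
        left
        exact ⟨t, by omega⟩
      · -- p > F (t+3) : recurse at t+2 with p' = p - F (t+3)
        have hp'1 : 1 ≤ p - F (t+3) := by omega
        have hp'2 : (p - F (t+3)) + 2 ≤ F (t+2) := by omega
        rcases ih (t+2) (by omega) (p - F (t+3)) hp'1 hp'2 with ⟨m, hm⟩ | ⟨r, hb, hne⟩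
        · left
          exact ⟨m, by omega⟩
        · right
          refine ⟨r, by omega, ?_⟩
          have hper : fibInf ((r + (p - F (t+3))) + F (t+3)) = fibInf (r + (p - F (t+3))) := by
            refine fib_period (t+2) (r + (p - F (t+3))) ?_
            have a3 : F (t+2+1) = F (t+3) := rfl
            have a4 : F (t+2+3) = F (t+5) := rfl
            have e5 : F (t+5) = F (t+4) + F (t+3) := F_add_two (t+3)
            omega
          rw [show r + p = (r + (p - F (t+3))) + F (t+3) from by omega]
          rw [show fibInf (r + (p - F (t+3)) + F (t+3)) = fibInf (r + (p - F (t+3))) from hper]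
          exact hne



lemma fibPrefix_length (n : ℕ) : (fibPrefix n).length = n := by simp [fibPrefix]

lemma take_fibPrefix {c n : ℕ} (h : c ≤ n) : (fibPrefix n).take c = fibPrefix c := by
  unfold fibPrefix
  rw [← List.map_take, List.take_range, Nat.min_eq_left h]

lemma occ_forall {n i c : ℕ} (hin : i + c ≤ n)
    (h2 : ((fibPrefix n).drop i).take c = fibPrefix c) :
    ∀ r, r < c → fibInf (i + r) = fibInf r := by
  intro r hr
  have h := congrArg (fun l => l[r]?) h2
  simp only [List.getElem?_take, if_pos hr, List.getElem?_drop] at h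
  unfold fibPrefix at h
  rw [List.getElem?_map, List.getElem?_map, List.getElem?_range (by omega),
    List.getElem?_range hr] at h
  simpa using h

lemma super_main (k : ℕ) : Superprimitive (fibPrefix (F k - 1)) := by
  rintro ⟨C, ⟨⟨i0, hocc0⟩, hcov⟩, hlen⟩
  set n := F k - 1 with hn
  have hT : (fibPrefix n).length = n := fibPrefix_length n
  rw [hT] at hlen
  have hnpos : 0 < n := by omega
  -- C is the prefix of length c
  obtain ⟨i, ⟨hoc1, hoc2⟩, hile, hilt⟩ := hcov 0 (by omega)
  have hi0 : i = 0 := by omega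
  subst hi0
  have hc1 : 1 ≤ C.length := by omega
  rw [hT] at hoc1
  have hCeq : C = fibPrefix C.length := by
    conv_lhs => rw [← hoc2]
    rw [List.drop_zero, take_fibPrefix (by omega)]
  set c := C.length with hcdef
  -- C is a suffix: occurrence at p = n - c
  obtain ⟨i, ⟨hoc1', hoc2'⟩, hile', hilt'⟩ := hcov (n-1) (by omega)
  rw [hT] at hoc1'
  have hieq : i = n - c := by omega
  subst hieq
  rw [hCeq, fibPrefix_length] at hoc2'
  have hsuf : ∀ r, r < c → fibInf ((n - c) + r) = fibInf r :=
    occ_forall (n := n) (by omega) hoc2'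
  -- apply need2
  have hFk : 1 ≤ F k := F_pos k
  have hples : (n - c) + 2 ≤ F k := by omega
  rcases need2 k (n - c) (by omega) hples with ⟨m, hm⟩ | ⟨r, hb, hne⟩
  · -- c + 1 = F (m+2) : use covering of position c
    have hcm : c + 1 = F (m+2) := by omega
    obtain ⟨i, ⟨hoc1'', hoc2''⟩, hile'', hilt''⟩ := hcov c (by omega)
    rw [hT] at hoc1''
    rw [hCeq, fibPrefix_length] at hoc2''
    have hoccI : ∀ r, r < c → fibInf (i + r) = fibInf r :=
      occ_forall (n := n) (by omega) hoc2''
    have hi1 : 1 ≤ i := by omega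
    obtain ⟨r, hr, hne⟩ := need1 m i hi1 (by omega)
    have hv := hoccI r (by omega)
    rw [Nat.add_comm i r] at hv
    exact hne hv.symm
  · have hv := hsuf r (by omega)
    rw [Nat.add_comm (n - c) r] at hv
    exact hne hv.symm


lemma cover_self (T : List Bool) : IsCover T T := by
  constructor
  · exact ⟨0, by simp [OccursAt]⟩
  · intro q hq
    exact ⟨0, by simp [OccursAt], by omega, by omega⟩

lemma covLen_eq (T : List Bool) (hsp : Superprimitive T) : covLen T = T.length := by
  have hmem : T.length ∈ {c | ∃ C : List Bool, C.length = c ∧ IsCover C T} :=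
    ⟨T, rfl, cover_self T⟩
  refine le_antisymm (Nat.sInf_le hmem) (le_csInf ⟨T.length, hmem⟩ ?_)
  rintro b ⟨C, rfl, hcov⟩
  by_contra hlt
  exact hsp ⟨C, hcov, by omega⟩


/-- For every `k ≥ 4`, `Cov_Fib[F_k - 1] = F_k - 1`; that is, the prefix of
the infinite Fibonacci word of length `F_k - 1` is superprimitive. -/
theorem stmt7 (k : ℕ) (hk : 4 ≤ k) :
    covFib (F k - 1) = F k - 1 ∧ Superprimitive (fibPrefix (F k - 1)) := by
  refine ⟨?_, super_main k⟩
  rw [covFib, covLen_eq _ (super_main k), fibPrefix_length]
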